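/- Let Φ : ℂ → ℂ satisfy Φ(z) − z ∈ L^∞ and |Φ(z) − z| ≤ C|z|^{−2/p} for |z| > 2R, with p > 2. Then for every ξ ∈ ℂ and every δ with 1 − 1/p < δ < 1, the function z ↦ e^{−i(Φ(z)−z)ξ} − 1 lies in L²_{−δ}(ℝ² \ B(0,R)) ∩ L^∞(ℝ² \ B(0,R)). -/

import Mathlib

open MeasureTheory Metric Complex

lemma my_abs_exp_sub_one_le (w : ℂ) :
    ‖Complex.exp w - 1‖ ≤ ‖w‖ * Real.exp (‖w‖) := by
  have hconv : Convex ℝ (Metric.closedBall (0:ℂ) (‖w‖)) := convex_closedBall _ _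
  have hf : ∀ z ∈ Metric.closedBall (0:ℂ) (‖w‖),
      HasFDerivWithinAt Complex.exp
        (ContinuousLinearMap.smulRight (1 : ℂ →L[ℂ] ℂ) (Complex.exp z))
        (Metric.closedBall (0:ℂ) (‖w‖)) z := fun z _ =>
    (Complex.hasDerivAt_exp z).hasFDerivAt.hasFDerivWithinAt
  have hbound : ∀ z ∈ Metric.closedBall (0:ℂ) (‖w‖),
      ‖ContinuousLinearMap.smulRight (1 : ℂ →L[ℂ] ℂ) (Complex.exp z)‖ ≤
        Real.exp (‖w‖) := by
    intro z hz
    rw [ContinuousLinearMap.norm_smulRight_apply, norm_one, one_mul,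
      Complex.norm_exp]
    exact Real.exp_le_exp.2 (le_trans (Complex.re_le_norm z)
      (by simpa using mem_closedBall_zero_iff.1 hz))
  have h := hconv.norm_image_sub_le_of_norm_hasFDerivWithin_le (x := 0) (y := w) hf hbound
    (mem_closedBall_self (norm_nonneg w))
    (by simp [mem_closedBall_zero_iff])
  simpa [Complex.exp_zero, mul_comm] using h

/-- If `Φ(z) - z` is bounded and `|Φ(z) - z| ≤ C |z|^{-2/p}` for `|z| > 2R`
with `p > 2`, then for every `ξ ∈ ℂ` and every `δ` with `1 - 1/p < δ < 1`, the function
`z ↦ e^{-i(Φ(z)-z)ξ} - 1` lies in `L²_{-δ} ∩ L^∞` on `ℝ² ∖ B(0,R)`. -/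
theorem exp_phase_in_weighted_L2_and_Linfty (Φ : ℂ → ℂ) (R p C : ℝ)
    (hR : 0 < R) (hp : 2 < p)
    (hbdd : ∃ B : ℝ, ∀ z : ℂ, ‖Φ z - z‖ ≤ B)
    (hdecay : ∀ z : ℂ, 2 * R < ‖z‖ →
      ‖Φ z - z‖ ≤ C / ‖z‖ ^ (2 / p)) :
    ∀ ξ : ℂ, ∀ δ : ℝ, 1 - 1 / p < δ → δ < 1 →
      (∫⁻ z in {z : ℂ | R ≤ ‖z‖},
          ENNReal.ofReal ((‖Complex.exp (-Complex.I * (Φ z - z) * ξ) - 1‖) ^ 2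
            * (1 + ‖z‖ ^ 2) ^ (-δ))) < ⊤ ∧
      ∃ B : ℝ, ∀ z ∈ {z : ℂ | R ≤ ‖z‖},
        ‖Complex.exp (-Complex.I * (Φ z - z) * ξ) - 1‖ ≤ B := by
  intro ξ δ hδ1 hδ2
  obtain ⟨B, hB⟩ := hbdd
  have hB0 : 0 ≤ B := le_trans (norm_nonneg _) (hB 0)
  have hξa : 0 ≤ ‖ξ‖ := norm_nonneg ξ
  set M : ℝ := ‖ξ‖ * Real.exp (B * ‖ξ‖) with hMdef
  have hM0 : 0 ≤ M := by positivity
  -- the key pointwise bound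
  have key : ∀ z : ℂ, ‖Complex.exp (-Complex.I * (Φ z - z) * ξ) - 1‖
      ≤ ‖Φ z - z‖ * M := by
    intro z
    have habs : ‖-Complex.I * (Φ z - z) * ξ‖
        = ‖Φ z - z‖ * ‖ξ‖ := by
      simp [map_mul]
    calc ‖Complex.exp (-Complex.I * (Φ z - z) * ξ) - 1‖
        ≤ ‖-Complex.I * (Φ z - z) * ξ‖
            * Real.exp (‖-Complex.I * (Φ z - z) * ξ‖) :=
          my_abs_exp_sub_one_le _
      _ ≤ (‖Φ z - z‖ * ‖ξ‖) * Real.exp (B * ‖ξ‖) := by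
          rw [habs]
          gcongr
          exact hB z
      _ = ‖Φ z - z‖ * M := by rw [hMdef]; ring
  constructor
  · -- the weighted L² bound
    have hp0 : 0 < p := by linarith
    have h2p : (0:ℝ) < 2 / p := by positivity
    have h1p : 1 / p < 1 / 2 := by
      rw [div_lt_div_iff₀ hp0 two_pos]; linarith
    have hδ0 : 0 < δ := by linarith
    set s : ℝ := 2 * δ + 4 / p with hsdef
    have hs2 : (2:ℝ) < s := by
      have h1pp : (0:ℝ) < 1 / p := by positivity
      have h4 : 4 / p = 4 * (1 / p) := by ring
      rw [hsdef]
      linarith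
    have hs0 : (0:ℝ) < s := by linarith
    set C' : ℝ := max C 0 with hC'def
    have hC'0 : 0 ≤ C' := le_max_right _ _
    set K1 : ℝ := max ((B * M) ^ 2 * (2 * R) ^ s) ((M * C') ^ 2) with hK1def
    have hK10 : 0 ≤ K1 := le_trans (by positivity) (le_max_right _ _)
    set K : ℝ := K1 * (1 + 1 / R) ^ s with hKdef
    have hK0 : 0 ≤ K := by positivity
    -- pointwise bound by K1 * ‖z‖^(-s) on the region
    have hpt : ∀ z : ℂ, R ≤ ‖z‖ →
        (‖Complex.exp (-Complex.I * (Φ z - z) * ξ) - 1‖) ^ 2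
          * (1 + ‖z‖ ^ 2) ^ (-δ) ≤ K1 * ‖z‖ ^ (-s) := by
      intro z hz
      have hz0 : 0 < ‖z‖ := lt_of_lt_of_le hR hz
      rcases le_or_gt (‖z‖) (2 * R) with hcase | hcase
      · -- annulus: use boundedness
        have h1 : (‖Complex.exp (-Complex.I * (Φ z - z) * ξ) - 1‖) ^ 2
            * (1 + ‖z‖ ^ 2) ^ (-δ) ≤ (B * M) ^ 2 := by
          have hb : ‖Complex.exp (-Complex.I * (Φ z - z) * ξ) - 1‖ ≤ B * M :=
            le_trans (key z) (mul_le_mul_of_nonneg_right (hB z) hM0)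
          have hw : (1 + ‖z‖ ^ 2) ^ (-δ) ≤ 1 :=
            Real.rpow_le_one_of_one_le_of_nonpos (by nlinarith [sq_nonneg (‖z‖)]) (by linarith)
          calc (‖Complex.exp (-Complex.I * (Φ z - z) * ξ) - 1‖) ^ 2
              * (1 + ‖z‖ ^ 2) ^ (-δ)
              ≤ (B * M) ^ 2 * 1 :=
                mul_le_mul (pow_le_pow_left₀ (norm_nonneg _) hb 2) hw
                  (Real.rpow_nonneg (by positivity) _) (by positivity)
            _ = (B * M) ^ 2 := mul_one _
        have h2 : (B * M) ^ 2 ≤ (B * M) ^ 2 * (2 * R) ^ s * ‖z‖ ^ (-s) := by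
          have hzs : ‖z‖ ^ s ≤ (2 * R) ^ s :=
            Real.rpow_le_rpow (norm_nonneg _) hcase hs0.le
          have hinv : (1:ℝ) ≤ (2 * R) ^ s * ‖z‖ ^ (-s) := by
            rw [Real.rpow_neg (norm_nonneg _), ← div_eq_mul_inv,
              le_div_iff₀ (Real.rpow_pos_of_pos hz0 s), one_mul]
            exact hzs
          calc (B * M) ^ 2 = (B * M) ^ 2 * 1 := (mul_one _).symm
            _ ≤ (B * M) ^ 2 * ((2 * R) ^ s * ‖z‖ ^ (-s)) :=
                mul_le_mul_of_nonneg_left hinv (by positivity)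
            _ = (B * M) ^ 2 * (2 * R) ^ s * ‖z‖ ^ (-s) := by ring
        exact le_trans (le_trans h1 h2)
          (mul_le_mul_of_nonneg_right (le_max_left _ _) (by positivity))
      · -- far region: use decay
        have hd : ‖Φ z - z‖ ≤ C' / ‖z‖ ^ (2 / p) := by
          refine le_trans (hdecay z hcase) ?_
          gcongr
          exact le_max_left _ _
        have hrp : (0:ℝ) < ‖z‖ ^ (2 / p) := Real.rpow_pos_of_pos hz0 _
        have hb : ‖Complex.exp (-Complex.I * (Φ z - z) * ξ) - 1‖
            ≤ M * C' / ‖z‖ ^ (2 / p) := by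
          refine le_trans (key z) ?_
          calc ‖Φ z - z‖ * M ≤ (C' / ‖z‖ ^ (2 / p)) * M :=
                mul_le_mul_of_nonneg_right hd hM0
            _ = M * C' / ‖z‖ ^ (2 / p) := by ring
        have hsq : (‖Complex.exp (-Complex.I * (Φ z - z) * ξ) - 1‖) ^ 2
            ≤ (M * C') ^ 2 * ‖z‖ ^ (-(4 / p)) := by
          have heq : (M * C' / ‖z‖ ^ (2 / p)) ^ 2
              = (M * C') ^ 2 * ‖z‖ ^ (-(4 / p)) := by
            rw [div_pow, Real.rpow_neg (norm_nonneg _), div_eq_mul_inv]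
            congr 2
            rw [← Real.rpow_natCast (‖z‖ ^ (2 / p)) 2,
              ← Real.rpow_mul (norm_nonneg _)]
            congr 1
            push_cast
            ring
          rw [← heq]
          exact pow_le_pow_left₀ (norm_nonneg _) hb 2
        have hw : (1 + ‖z‖ ^ 2) ^ (-δ) ≤ ‖z‖ ^ (-(2 * δ)) := by
          have h1 : (1 + ‖z‖ ^ 2) ^ (-δ) ≤ (‖z‖ ^ 2) ^ (-δ) :=
            Real.rpow_le_rpow_of_nonpos (pow_pos hz0 2) (by linarith) (by linarith)
          refine le_trans h1 (le_of_eq ?_)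
          rw [← Real.rpow_natCast (‖z‖) 2, ← Real.rpow_mul (norm_nonneg _)]
          congr 1
          push_cast
          ring
        calc (‖Complex.exp (-Complex.I * (Φ z - z) * ξ) - 1‖) ^ 2
            * (1 + ‖z‖ ^ 2) ^ (-δ)
            ≤ ((M * C') ^ 2 * ‖z‖ ^ (-(4 / p))) * ‖z‖ ^ (-(2 * δ)) :=
              mul_le_mul hsq hw (Real.rpow_nonneg (by positivity) _)
                (mul_nonneg (by positivity) (Real.rpow_nonneg (norm_nonneg _) _))
          _ = (M * C') ^ 2 * ‖z‖ ^ (-s) := by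
              rw [mul_assoc, ← Real.rpow_add hz0]
              congr 1
              rw [hsdef]
              ring
          _ ≤ K1 * ‖z‖ ^ (-s) :=
              mul_le_mul_of_nonneg_right (le_max_right _ _)
                (Real.rpow_nonneg (norm_nonneg _) _)
    -- convert ‖z‖^(-s) to (1 + ‖z‖)^(-s)
    have hpt2 : ∀ z : ℂ, R ≤ ‖z‖ →
        ‖z‖ ^ (-s) ≤ (1 + 1 / R) ^ s * (1 + ‖z‖) ^ (-s) := by
      intro z hz
      have hz0 : 0 < ‖z‖ := lt_of_lt_of_le hR hz
      have h1 : 1 + ‖z‖ ≤ (1 + 1 / R) * ‖z‖ := by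
        have : (1:ℝ) ≤ ‖z‖ / R := (one_le_div hR).2 hz
        have h2 : ‖z‖ / R = 1 / R * ‖z‖ := by ring
        nlinarith [hR, hz0]
      have h2 : (1 + ‖z‖) ^ s ≤ (1 + 1 / R) ^ s * ‖z‖ ^ s := by
        calc (1 + ‖z‖) ^ s ≤ ((1 + 1 / R) * ‖z‖) ^ s :=
              Real.rpow_le_rpow (by positivity) h1 hs0.le
          _ = (1 + 1 / R) ^ s * ‖z‖ ^ s :=
              Real.mul_rpow (by positivity) (norm_nonneg _)
      rw [Real.rpow_neg (norm_nonneg _),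
        Real.rpow_neg (by positivity : (0:ℝ) ≤ 1 + ‖z‖),
        ← div_eq_mul_inv, inv_eq_one_div, div_le_div_iff₀
        (Real.rpow_pos_of_pos hz0 s) (Real.rpow_pos_of_pos (by positivity) s), one_mul]
      exact h2
    have hS : MeasurableSet {z : ℂ | R ≤ ‖z‖} := by
      have : {z : ℂ | R ≤ ‖z‖} = (fun z : ℂ => ‖z‖) ⁻¹' Set.Ici R := rfl
      rw [this]
      exact (continuous_norm.measurable) measurableSet_Ici
    calc (∫⁻ z in {z : ℂ | R ≤ ‖z‖},
          ENNReal.ofReal ((‖Complex.exp (-Complex.I * (Φ z - z) * ξ) - 1‖) ^ 2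
            * (1 + ‖z‖ ^ 2) ^ (-δ)))
        ≤ ∫⁻ z in {z : ℂ | R ≤ ‖z‖},
            ENNReal.ofReal (K * (1 + ‖z‖) ^ (-s)) := by
          refine lintegral_mono_ae ((ae_restrict_iff' hS).2 (ae_of_all _ fun z hz => ?_))
          refine ENNReal.ofReal_le_ofReal ?_
          calc (‖Complex.exp (-Complex.I * (Φ z - z) * ξ) - 1‖) ^ 2
              * (1 + ‖z‖ ^ 2) ^ (-δ)
              ≤ K1 * ‖z‖ ^ (-s) := hpt z hz
            _ ≤ K1 * ((1 + 1 / R) ^ s * (1 + ‖z‖) ^ (-s)) := by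
                exact mul_le_mul_of_nonneg_left (hpt2 z hz) hK10
            _ = K * (1 + ‖z‖) ^ (-s) := by rw [hKdef]; ring
      _ ≤ ∫⁻ z : ℂ, ENNReal.ofReal (K * (1 + ‖z‖) ^ (-s)) :=
          setLIntegral_le_lintegral _ _
      _ = ENNReal.ofReal K * ∫⁻ z : ℂ, ENNReal.ofReal ((1 + ‖z‖) ^ (-s)) := by
          simp_rw [ENNReal.ofReal_mul hK0]
          exact lintegral_const_mul' _ _ ENNReal.ofReal_ne_top
      _ < ⊤ := by
          refine ENNReal.mul_lt_top ENNReal.ofReal_lt_top ?_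
          apply finite_integral_one_add_norm
          rw [Complex.finrank_real_complex]
          exact_mod_cast hs2
  · -- the L^∞ bound
    exact ⟨B * M, fun z _ => le_trans (key z) (mul_le_mul_of_nonneg_right (hB z) hM0)⟩
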